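/- Let p⁻, p₀, p⁺ ≥ 0 with p⁻ + p₀ + p⁺ = 1 and p⁻ > p⁺, let X₁, X₂, … be i.i.d. with P(Xᵢ = −1) = p⁻, P(Xᵢ = 0) = p₀, P(Xᵢ = +1) = p⁺, and let Y₀ = 0, Yᵢ = max(0, Yᵢ₋₁ + Xᵢ). Then for every n ≥ 0 and every integer i ≥ 0, P(Yₙ = i) ≤ (α/(1−α))ⁱ, where α = p⁺/(p⁺ + p⁻). -/

import Mathlib

open MeasureTheory ProbabilityTheory

/-- recursion function for the reflected walk -/
def rwF : (n : ℕ) → (Fin n → ℤ) → ℤ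
  | 0, _ => 0
  | n+1, v => max 0 (rwF n (fun i => v i.castSucc) + v (Fin.last n))

lemma rwF_meas : ∀ n, Measurable (rwF n)
  | 0 => measurable_const
  | n+1 => by
    apply Measurable.max measurable_const
    exact ((rwF_meas n).comp
      (measurable_pi_lambda _ fun i => measurable_pi_apply _)).add (measurable_pi_apply _)

/-- Reflected random walk with i.i.d. increments in {-1, 0, +1} and p⁻ > p⁺:
for every n and every integer i ≥ 0, P(Yₙ = i) ≤ (α/(1−α))^i where α = p⁺/(p⁺+p⁻). -/
theorem stmt4
    {Ω : Type*} [MeasureSpace Ω] [IsProbabilityMeasure (ℙ : Measure Ω)]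
    (pm p0 pp : ℝ) (hpm : 0 ≤ pm) (hp0 : 0 ≤ p0) (hpp : 0 ≤ pp)
    (hsum : pm + p0 + pp = 1) (hgt : pp < pm)
    (X : ℕ → Ω → ℤ) (hmeas : ∀ i, Measurable (X i))
    (hindep : iIndepFun X ℙ)
    (hident : ∀ i j, IdentDistrib (X i) (X j) ℙ ℙ)
    (hXm : ∀ i, (ℙ {ω | X i ω = -1}).toReal = pm)
    (hX0 : ∀ i, (ℙ {ω | X i ω = 0}).toReal = p0)
    (hXp : ∀ i, (ℙ {ω | X i ω = 1}).toReal = pp)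
    (Y : ℕ → Ω → ℤ)
    (hY0 : ∀ ω, Y 0 ω = 0)
    (hYs : ∀ i ω, Y (i + 1) ω = max 0 (Y i ω + X (i + 1) ω))
    (α : ℝ) (hα : α = pp / (pp + pm)) :
    ∀ n : ℕ, ∀ i : ℕ,
      (ℙ {ω | Y n ω = (i : ℤ)}).toReal ≤ (α / (1 - α)) ^ i := by
  have hpm' : 0 < pm := lt_of_le_of_lt hpp hgt
  have hppm : pp + pm ≠ 0 := by positivity
  have hβ : α / (1 - α) = pp / pm := by
    subst hα
    rw [show (1 : ℝ) - pp / (pp + pm) = pm / (pp + pm) by field_simp; ring]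
    have hpm0 : pm ≠ 0 := ne_of_gt hpm'
    field_simp
  set β : ℝ := α / (1 - α) with hβdef
  have hβ0 : 0 ≤ β := by rw [hβ]; positivity
  have hbpm : β * pm = pp := by rw [hβ]; field_simp
  have hkey : β ^ 2 * pm + β * p0 + pp = β := by
    linear_combination β * hbpm + β * hsum - hbpm
  -- trivial bound by 1
  have hle1 : ∀ (s : Set Ω), (ℙ s).toReal ≤ 1 := fun s => by
    simpa using ENNReal.toReal_mono ENNReal.one_ne_top prob_le_one
  -- representation of Y by rwF
  have hYrep : ∀ n ω, Y n ω = rwF n (fun i : Fin n => X (i + 1) ω) := by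
    intro n
    induction n with
    | zero => intro ω; rw [hY0]; rfl
    | succ n ih =>
      intro ω
      rw [hYs, ih]
      rfl
  -- independence of Y n and X (n+1)
  have hind : ∀ n, IndepFun (Y n) (X (n + 1)) ℙ := by
    intro n
    classical
    have hdisj : Disjoint (Finset.Icc 1 n) ({n + 1} : Finset ℕ) := by
      simp [Finset.disjoint_singleton_right, Finset.mem_Icc]
    have h := hindep.indepFun_finset (Finset.Icc 1 n) {n + 1} hdisj hmeas
    set G : ((Finset.Icc 1 n : Finset ℕ) → ℤ) → ℤ :=
      fun v => rwF n (fun i : Fin n =>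
        v ⟨i + 1, by simp only [Finset.mem_Icc]; omega⟩) with hG
    have hGmeas : Measurable G :=
      (rwF_meas n).comp (measurable_pi_lambda _ fun i => measurable_pi_apply _)
    set P : (({n + 1} : Finset ℕ) → ℤ) → ℤ :=
      fun v => v ⟨n + 1, Finset.mem_singleton_self _⟩ with hP
    have hPmeas : Measurable P := measurable_pi_apply _
    have h2 := h.comp hGmeas hPmeas
    have e1 : (G ∘ fun a (i : (Finset.Icc 1 n : Finset ℕ)) => X i a) = Y n := by
      funext ω
      simp only [Function.comp_apply, hG]
      rw [hYrep n ω]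
    have e2 : (P ∘ fun a (i : (({n+1} : Finset ℕ) : Finset ℕ)) => X i a) = X (n + 1) := rfl
    rwa [e1, e2] at h2
  -- product formula
  have hprod : ∀ n (j x : ℤ),
      ℙ ({ω | Y n ω = j} ∩ {ω | X (n + 1) ω = x}) = ℙ {ω | Y n ω = j} * ℙ {ω | X (n + 1) ω = x} := by
    intro n j x
    have := (hind n).measure_inter_preimage_eq_mul {j} {x}
      (measurableSet_singleton _) (measurableSet_singleton _)
    simpa [Set.preimage, Set.mem_singleton_iff] using this
  -- measurability of Y
  have hYmeas : ∀ n, Measurable (Y n) := by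
    intro n
    have : Y n = fun ω => rwF n (fun i : Fin n => X (i + 1) ω) := funext (hYrep n)
    rw [this]
    exact (rwF_meas n).comp (measurable_pi_lambda _ fun i => hmeas _)
  -- the bad event is null
  have hnull : ∀ k, ℙ {ω | X k ω ≠ -1 ∧ X k ω ≠ 0 ∧ X k ω ≠ 1} = 0 := by
    intro k
    set A := {ω | X k ω = -1}
    set B := {ω | X k ω = 0}
    set C := {ω | X k ω = 1}
    have hA : MeasurableSet A := hmeas k (measurableSet_singleton _)
    have hB : MeasurableSet B := hmeas k (measurableSet_singleton _)
    have hC : MeasurableSet C := hmeas k (measurableSet_singleton _)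
    have hAB : Disjoint A B := by
      rw [Set.disjoint_left]; intro ω h1 h2; simp only [A, B, Set.mem_setOf_eq] at h1 h2; omega
    have hAC : Disjoint A C := by
      rw [Set.disjoint_left]; intro ω h1 h2; simp only [A, C, Set.mem_setOf_eq] at h1 h2; omega
    have hBC : Disjoint B C := by
      rw [Set.disjoint_left]; intro ω h1 h2; simp only [B, C, Set.mem_setOf_eq] at h1 h2; omega
    have hU : ℙ (A ∪ B ∪ C) = ℙ A + ℙ B + ℙ C := by
      rw [measure_union (hAC.union_left hBC) hC, measure_union hAB hB]
    have hU1 : ℙ (A ∪ B ∪ C) = 1 := by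
      rw [← ENNReal.toReal_eq_one_iff]
      rw [hU, ENNReal.toReal_add (by finiteness) (by finiteness),
        ENNReal.toReal_add (by finiteness) (by finiteness), hXm k, hX0 k, hXp k]
      linarith
    have hcompl : ℙ ((A ∪ B ∪ C)ᶜ) = 0 := by
      rw [prob_compl_eq_zero_iff ((hA.union hB).union hC)]; exact hU1
    have : {ω | X k ω ≠ -1 ∧ X k ω ≠ 0 ∧ X k ω ≠ 1} = (A ∪ B ∪ C)ᶜ := by
      ext ω
      simp only [Set.mem_setOf_eq, Set.mem_compl_iff, Set.mem_union, A, B, C]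
      tauto
    rw [this]; exact hcompl
  -- main induction
  intro n
  induction n with
  | zero =>
    intro i
    cases i with
    | zero => simpa using hle1 _
    | succ k =>
      have : {ω | Y 0 ω = ((k + 1 : ℕ) : ℤ)} = ∅ := by
        ext ω; simp only [Set.mem_setOf_eq, Set.mem_empty_iff_false, iff_false]
        rw [hY0]; omega
      rw [this]
      simp only [measure_empty, ENNReal.toReal_zero]
      positivity
  | succ n ih =>
    intro i
    cases i with
    | zero => simpa using hle1 _
    | succ k =>
      set j : ℤ := ((k + 1 : ℕ) : ℤ) with hj
      set A := {ω | Y n ω = j + 1} ∩ {ω | X (n + 1) ω = -1}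
      set B := {ω | Y n ω = j} ∩ {ω | X (n + 1) ω = 0}
      set C := {ω | Y n ω = j - 1} ∩ {ω | X (n + 1) ω = 1}
      set N := {ω | X (n + 1) ω ≠ -1 ∧ X (n + 1) ω ≠ 0 ∧ X (n + 1) ω ≠ 1}
      have hsubset : {ω | Y (n + 1) ω = j} ⊆ A ∪ (B ∪ (C ∪ N)) := by
        intro ω hω
        simp only [Set.mem_setOf_eq] at hω
        rw [hYs] at hω
        have hjpos : (0 : ℤ) < j := by simp [hj]
        have hsum' : Y n ω + X (n + 1) ω = j := by
          rcases max_cases (0 : ℤ) (Y n ω + X (n + 1) ω) with ⟨h1, h2⟩ | ⟨h1, h2⟩ <;> omega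
        by_cases h1 : X (n + 1) ω = -1
        · exact Or.inl ⟨by simp only [Set.mem_setOf_eq]; omega, h1⟩
        by_cases h2 : X (n + 1) ω = 0
        · exact Or.inr (Or.inl ⟨by simp only [Set.mem_setOf_eq]; omega, h2⟩)
        by_cases h3 : X (n + 1) ω = 1
        · exact Or.inr (Or.inr (Or.inl ⟨by simp only [Set.mem_setOf_eq]; omega, h3⟩))
        · exact Or.inr (Or.inr (Or.inr ⟨h1, h2, h3⟩))
      have hbound : ℙ {ω | Y (n + 1) ω = j} ≤ ℙ A + ℙ B + ℙ C := by
        calc ℙ {ω | Y (n + 1) ω = j} ≤ ℙ (A ∪ (B ∪ (C ∪ N))) := measure_mono hsubset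
          _ ≤ ℙ A + ℙ (B ∪ (C ∪ N)) := measure_union_le _ _
          _ ≤ ℙ A + (ℙ B + ℙ (C ∪ N)) := by gcongr; exact measure_union_le _ _
          _ ≤ ℙ A + (ℙ B + (ℙ C + ℙ N)) := by gcongr <;> exact measure_union_le _ _
          _ = ℙ A + ℙ B + ℙ C := by rw [hnull (n + 1)]; ring
      have hreal : (ℙ {ω | Y (n + 1) ω = j}).toReal ≤
          (ℙ A).toReal + (ℙ B).toReal + (ℙ C).toReal := by
        have := ENNReal.toReal_mono (by finiteness) hbound
        rwa [ENNReal.toReal_add (by finiteness) (by finiteness),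
          ENNReal.toReal_add (by finiteness) (by finiteness)] at this
      have hAval : (ℙ A).toReal = (ℙ {ω | Y n ω = j + 1}).toReal * pm := by
        rw [show A = {ω | Y n ω = j + 1} ∩ {ω | X (n + 1) ω = -1} from rfl,
          hprod n (j + 1) (-1), ENNReal.toReal_mul, hXm (n + 1)]
      have hBval : (ℙ B).toReal = (ℙ {ω | Y n ω = j}).toReal * p0 := by
        rw [show B = {ω | Y n ω = j} ∩ {ω | X (n + 1) ω = 0} from rfl,
          hprod n j 0, ENNReal.toReal_mul, hX0 (n + 1)]
      have hCval : (ℙ C).toReal = (ℙ {ω | Y n ω = j - 1}).toReal * pp := by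
        rw [show C = {ω | Y n ω = j - 1} ∩ {ω | X (n + 1) ω = 1} from rfl,
          hprod n (j - 1) 1, ENNReal.toReal_mul, hXp (n + 1)]
      have ihA : (ℙ {ω | Y n ω = j + 1}).toReal ≤ β ^ (k + 2) := by
        have := ih (k + 2)
        have e : ((k + 2 : ℕ) : ℤ) = j + 1 := by simp [hj]; ring
        rwa [e] at this
      have ihB : (ℙ {ω | Y n ω = j}).toReal ≤ β ^ (k + 1) := ih (k + 1)
      have ihC : (ℙ {ω | Y n ω = j - 1}).toReal ≤ β ^ k := by
        have := ih k
        have e : ((k : ℕ) : ℤ) = j - 1 := by simp [hj]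
        rwa [e] at this
      calc (ℙ {ω | Y (n + 1) ω = j}).toReal
          ≤ (ℙ A).toReal + (ℙ B).toReal + (ℙ C).toReal := hreal
        _ = (ℙ {ω | Y n ω = j + 1}).toReal * pm + (ℙ {ω | Y n ω = j}).toReal * p0
            + (ℙ {ω | Y n ω = j - 1}).toReal * pp := by rw [hAval, hBval, hCval]
        _ ≤ β ^ (k + 2) * pm + β ^ (k + 1) * p0 + β ^ k * pp := by gcongr
        _ = β ^ k * (β ^ 2 * pm + β * p0 + pp) := by ring
        _ = β ^ k * β := by rw [hkey]
        _ = β ^ (k + 1) := by ring
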